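/- For every a : ZMod d × ZMod d → ℂ with Σ_{r,s} |a_{r,s}|² = 1, the operator P_a is an orthogonal projection of trace d: P_aᴴ = P_a, P_a · P_a = P_a, and Tr P_a = d. -/

import Mathlib

open Matrix Kronecker BigOperators

noncomputable def omega (d : ℕ) : ℂ := Complex.exp (2 * Real.pi * Complex.I / d)

noncomputable def WH (d : ℕ) [NeZero d] (p q : ZMod d) : Matrix (ZMod d) (ZMod d) ℂ :=
  fun j k => if j = k + p then omega d ^ (q.val * k.val) else 0

noncomputable def Pa (d : ℕ) [NeZero d] (a : ZMod d × ZMod d → ℂ) :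
    Matrix (ZMod d × ZMod d × ZMod d) (ZMod d × ZMod d × ZMod d) ℂ :=
  fun x y => (d : ℂ)⁻¹ * ∑ r : ZMod d, ∑ s : ZMod d, ∑ r' : ZMod d, ∑ s' : ZMod d,
    a (r, s) * (starRingEnd ℂ) (a (r', s')) * ((WH d r s)ᴴ * WH d r' s') x.1 y.1 *
      WH d r s x.2.1 x.2.2 * (starRingEnd ℂ) (WH d r' s' y.2.1 y.2.2)

section aux
variable (d : ℕ) [NeZero d]

lemma omega_prim : IsPrimitiveRoot (omega d) d :=
  Complex.isPrimitiveRoot_exp d (NeZero.ne d)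

lemma omega_ne_zero : omega d ≠ 0 := Complex.exp_ne_zero _

lemma omega_conj_zpow (m : ℤ) :
    (starRingEnd ℂ) (omega d ^ m) = omega d ^ (-m) := by
  have h1 : ‖omega d‖ = 1 :=
    Complex.norm_eq_one_of_pow_eq_one (omega_prim d).pow_eq_one (NeZero.ne d)
  rw [_root_.zpow_neg, ← Complex.inv_eq_conj (by rw [norm_zpow, h1, _root_.one_zpow])]

lemma sum_omega (m : ℤ) :
    (∑ k : ZMod d, omega d ^ (m * (k.val : ℤ))) =
      if (m : ZMod d) = 0 then (d : ℂ) else 0 := by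
  have hrange : (∑ k : ZMod d, omega d ^ (m * (k.val : ℤ)))
      = ∑ i ∈ Finset.range d, (omega d ^ m) ^ i := by
    rw [Finset.sum_bij' (fun (k : ZMod d) _ => k.val) (fun i _ => (i : ZMod d))]
    · intro k _; exact Finset.mem_range.2 (ZMod.val_lt k)
    · intro i hi; exact Finset.mem_univ _
    · intro k _; simp [ZMod.natCast_val, ZMod.cast_id]
    · intro i hi; exact ZMod.val_cast_of_lt (Finset.mem_range.1 hi)
    · intro k _; rw [← zpow_natCast (omega d ^ m), ← _root_.zpow_mul]
  rw [hrange]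
  by_cases hm : (m : ZMod d) = 0
  · have hdvd : (d : ℤ) ∣ m := (ZMod.intCast_zmod_eq_zero_iff_dvd m d).mp hm
    have : omega d ^ m = 1 := ((omega_prim d).zpow_eq_one_iff_dvd m).mpr hdvd
    simp [hm, this]
  · have hne : omega d ^ m ≠ 1 := by
      intro h
      exact hm ((ZMod.intCast_zmod_eq_zero_iff_dvd m d).mpr
        (((omega_prim d).zpow_eq_one_iff_dvd m).mp h))
    have hgeom := geom_sum_mul (omega d ^ m) d
    have hpow : (omega d ^ m) ^ d - 1 = 0 := by
      rw [← zpow_natCast (omega d ^ m), ← _root_.zpow_mul, mul_comm, _root_.zpow_mul,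
        zpow_natCast, (omega_prim d).pow_eq_one, _root_.one_zpow, sub_self]
    rw [hpow] at hgeom
    have := mul_eq_zero.mp hgeom
    simp only [hm, if_false]
    rcases this with h | h
    · exact h
    · exact absurd (sub_eq_zero.mp h) hne

variable {d}

/-- character orthogonality for the `omega` powers appearing in `WH`. -/
lemma sum_conj_mul_omega (s s' : ZMod d) :
    (∑ k : ZMod d, (starRingEnd ℂ) (omega d ^ (s.val * k.val)) * omega d ^ (s'.val * k.val))
      = if s = s' then (d : ℂ) else 0 := by
  have key : ∀ k : ZMod d,
      (starRingEnd ℂ) (omega d ^ (s.val * k.val)) * omega d ^ (s'.val * k.val)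
        = omega d ^ (((s'.val : ℤ) - (s.val : ℤ)) * (k.val : ℤ)) := by
    intro k
    rw [← zpow_natCast (omega d) (s.val * k.val), ← zpow_natCast (omega d) (s'.val * k.val),
      omega_conj_zpow, ← zpow_add₀ (omega_ne_zero d)]
    congr 1
    push_cast
    ring
  simp only [key]
  rw [sum_omega]
  have hiff : ((((s'.val : ℤ) - (s.val : ℤ)) : ℤ) : ZMod d) = 0 ↔ s = s' := by
    push_cast
    rw [ZMod.natCast_val, ZMod.natCast_val, ZMod.cast_id, ZMod.cast_id, sub_eq_zero, eq_comm]
  by_cases h : s = s'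
  · rw [if_pos (hiff.mpr h), if_pos h]
  · rw [if_neg (fun hc => h (hiff.mp hc)), if_neg h]

/-- conj z * z = 1 for the omega powers -/
lemma conj_mul_self_omega (n : ℕ) :
    (starRingEnd ℂ) (omega d ^ n) * omega d ^ n = 1 := by
  rw [← zpow_natCast (omega d) n, omega_conj_zpow, ← zpow_add₀ (omega_ne_zero d),
    neg_add_cancel, zpow_zero]

/-- Hilbert–Schmidt orthogonality of the Weyl–Heisenberg matrices. -/
lemma WH_HS (p q p' q' : ZMod d) :
    (∑ j : ZMod d, ∑ k : ZMod d,
        (starRingEnd ℂ) (WH d p q j k) * WH d p' q' j k)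
      = if p = p' ∧ q = q' then (d : ℂ) else 0 := by
  rw [Finset.sum_comm]
  have inner : ∀ k : ZMod d,
      (∑ j : ZMod d, (starRingEnd ℂ) (WH d p q j k) * WH d p' q' j k)
        = if p = p' then
            (starRingEnd ℂ) (omega d ^ (q.val * k.val)) * omega d ^ (q'.val * k.val)
          else 0 := by
    intro k
    simp only [WH, apply_ite (starRingEnd ℂ), map_zero, ite_mul, zero_mul, mul_ite, mul_zero]
    rw [Finset.sum_ite_eq' Finset.univ (k + p')]
    simp only [Finset.mem_univ, if_true, add_right_inj]
    by_cases hp : p = p'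
    · subst hp; simp
    · rw [if_neg (fun h => hp h.symm), if_neg hp]
  simp only [inner]
  by_cases hp : p = p'
  · subst hp
    simp only [if_pos rfl, true_and]
    exact sum_conj_mul_omega q q'
  · simp [hp]

lemma WH_unitary (p q : ZMod d) : (WH d p q)ᴴ * WH d p q = 1 := by
  ext i i'
  rw [Matrix.mul_apply]
  simp only [conjTranspose_apply, WH, Complex.star_def, apply_ite (starRingEnd ℂ), map_zero,
    ite_mul, zero_mul, mul_ite, mul_zero]
  rw [Finset.sum_ite_eq' Finset.univ (i' + p)]
  simp only [Finset.mem_univ, if_true, add_left_inj]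
  by_cases h : i' = i
  · subst h
    rw [if_pos rfl, conj_mul_self_omega, Matrix.one_apply_eq]
  · rw [if_neg h, Matrix.one_apply_ne (fun hc => h hc.symm)]

lemma WH_HS' (p q p' q' : ZMod d) :
    (∑ j : ZMod d, ∑ k : ZMod d,
        (starRingEnd ℂ) (WH d p q j k) * WH d p' q' j k)
      = if q = q' then (if p = p' then (d : ℂ) else 0) else 0 := by
  rw [WH_HS]
  by_cases h1 : p = p' <;> by_cases h2 : q = q' <;> simp [h1, h2]

lemma WH_unitary' (p q : ZMod d) : WH d p q * (WH d p q)ᴴ = 1 :=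
  mul_eq_one_comm.mpr (WH_unitary p q)

end aux

section main

variable {d : ℕ} [NeZero d]

/-- the isometry whose range projection is `Pa`. -/
noncomputable def Tmat (d : ℕ) [NeZero d] (a : ZMod d × ZMod d → ℂ) :
    Matrix (ZMod d × ZMod d × ZMod d) (ZMod d) ℂ :=
  fun x l => ∑ r : ZMod d, ∑ s : ZMod d,
    a (r, s) * (WH d r s)ᴴ x.1 l * WH d r s x.2.1 x.2.2

lemma sum_swap5 {α β : Type*} [Fintype α] [Fintype β] {M : Type*} [AddCommMonoid M]
    (F : α → β → β → β → β → M) :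
    (∑ l : α, ∑ r : β, ∑ s : β, ∑ r' : β, ∑ s' : β, F l r s r' s')
      = ∑ r : β, ∑ s : β, ∑ r' : β, ∑ s' : β, ∑ l : α, F l r s r' s' := by
  rw [Finset.sum_comm]
  refine Finset.sum_congr rfl fun r _ => ?_
  rw [Finset.sum_comm]
  refine Finset.sum_congr rfl fun s _ => ?_
  rw [Finset.sum_comm]
  refine Finset.sum_congr rfl fun r' _ => ?_
  rw [Finset.sum_comm]

lemma sum_swap4 {β : Type*} [Fintype β] {M : Type*} [AddCommMonoid M]
    (F : β → β → β → β → M) :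
    (∑ a : β, ∑ b : β, ∑ c : β, ∑ e : β, F a b c e)
      = ∑ c : β, ∑ e : β, ∑ a : β, ∑ b : β, F a b c e := by
  have h1 : ∀ a : β, (∑ b : β, ∑ c : β, ∑ e : β, F a b c e)
      = ∑ c : β, ∑ e : β, ∑ b : β, F a b c e := by
    intro a
    rw [Finset.sum_comm]
    exact Finset.sum_congr rfl fun c _ => by rw [Finset.sum_comm]
  simp only [h1]
  rw [Finset.sum_comm]
  refine Finset.sum_congr rfl fun c _ => ?_
  rw [Finset.sum_comm]

lemma sum_rot3 {β : Type*} [Fintype β] {M : Type*} [AddCommMonoid M] (F : β → β → β → M) :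
    (∑ a : β, ∑ b : β, ∑ c : β, F a b c) = ∑ b : β, ∑ c : β, ∑ a : β, F a b c := by
  rw [Finset.sum_comm]
  exact Finset.sum_congr rfl fun b _ => by rw [Finset.sum_comm]

lemma Pa_eq (a : ZMod d × ZMod d → ℂ) :
    Pa d a = (d : ℂ)⁻¹ • (Tmat d a * (Tmat d a)ᴴ) := by
  ext x y
  simp only [Pa, Tmat, Matrix.smul_apply, Matrix.mul_apply, Matrix.conjTranspose_apply,
    smul_eq_mul, map_sum, _root_.map_mul, Complex.star_def, starRingEnd_self_apply,
    Finset.mul_sum, Finset.sum_mul]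
  conv_rhs => rw [sum_swap5]
  conv_rhs => rw [sum_swap4 (fun r' s' r s => ∑ l : ZMod d,
    (↑d)⁻¹ * (a (r, s) * (starRingEnd ℂ) (WH d r s l x.1) * WH d r s x.2.1 x.2.2 *
      ((starRingEnd ℂ) (a (r', s')) * WH d r' s' l y.1 *
        (starRingEnd ℂ) (WH d r' s' y.2.1 y.2.2))))]
  refine Finset.sum_congr rfl fun r _ => ?_
  refine Finset.sum_congr rfl fun s _ => ?_
  refine Finset.sum_congr rfl fun r' _ => ?_
  refine Finset.sum_congr rfl fun s' _ => ?_
  refine Finset.sum_congr rfl fun l _ => ?_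
  ring

lemma TT (a : ZMod d × ZMod d → ℂ)
    (ha : ∑ rs : ZMod d × ZMod d, ‖a rs‖ ^ 2 = 1) :
    (Tmat d a)ᴴ * Tmat d a = (d : ℂ) • 1 := by
  ext l l'
  rw [Matrix.mul_apply]
  simp only [conjTranspose_apply, Tmat, Complex.star_def, map_sum, _root_.map_mul,
    starRingEnd_self_apply, Finset.mul_sum, Finset.sum_mul]
  rw [sum_swap5 (fun (x : ZMod d × ZMod d × ZMod d) (r' s' r s : ZMod d) =>
    (starRingEnd ℂ) (a (r, s)) * WH d r s l x.1 * (starRingEnd ℂ) (WH d r s x.2.1 x.2.2) *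
      (a (r', s') * (starRingEnd ℂ) (WH d r' s' l' x.1) * WH d r' s' x.2.1 x.2.2))]
  have key : ∀ r' s' r s : ZMod d,
      (∑ x : ZMod d × ZMod d × ZMod d,
          (starRingEnd ℂ) (a (r, s)) * WH d r s l x.1 * (starRingEnd ℂ) (WH d r s x.2.1 x.2.2) *
            (a (r', s') * (starRingEnd ℂ) (WH d r' s' l' x.1) * WH d r' s' x.2.1 x.2.2))
        = (starRingEnd ℂ) (a (r, s)) * a (r', s') *
            ((WH d r s * (WH d r' s')ᴴ) l l') *
            (if s = s' then (if r = r' then (d : ℂ) else 0) else 0) := by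
    intro r' s' r s
    rw [← WH_HS' r s r' s', Matrix.mul_apply]
    simp only [conjTranspose_apply, Complex.star_def, Fintype.sum_prod_type,
      Finset.mul_sum, Finset.sum_mul]
    conv_lhs => rw [sum_rot3]
    refine Finset.sum_congr rfl fun i _ => ?_
    refine Finset.sum_congr rfl fun j _ => ?_
    refine Finset.sum_congr rfl fun k _ => ?_
    ring
  simp only [key, mul_ite, mul_zero, Finset.sum_ite_eq', Finset.mem_univ, if_true]
  simp only [WH_unitary']
  have hsum : (∑ rs : ZMod d × ZMod d, (starRingEnd ℂ) (a rs) * a rs) = 1 := by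
    have habs : ∀ z : ℂ, (starRingEnd ℂ) z * z = ((‖z‖ ^ 2 : ℝ) : ℂ) := by
      intro z
      rw [mul_comm, Complex.mul_conj, Complex.sq_norm]
    simp only [habs]
    rw [← Complex.ofReal_sum, ha, Complex.ofReal_one]
  have hre : ∀ r' s' : ZMod d,
      (starRingEnd ℂ) (a (r', s')) * a (r', s') * (1 : Matrix (ZMod d) (ZMod d) ℂ) l l' * (d : ℂ)
        = ((starRingEnd ℂ) (a (r', s')) * a (r', s')) *
            ((1 : Matrix (ZMod d) (ZMod d) ℂ) l l' * (d : ℂ)) := fun _ _ => by ring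
  simp only [hre, ← Finset.sum_mul]
  rw [← Fintype.sum_prod_type', hsum, one_mul, Matrix.smul_apply, smul_eq_mul]
  ring

end main

/-- For normalized coefficients `a`, `P_a` is an orthogonal projection of trace `d`. -/
theorem Pa_projection_trace (d : ℕ) [NeZero d] (a : ZMod d × ZMod d → ℂ)
    (ha : ∑ rs : ZMod d × ZMod d, ‖a rs‖ ^ 2 = 1) :
    (Pa d a)ᴴ = Pa d a ∧ Pa d a * Pa d a = Pa d a ∧ Matrix.trace (Pa d a) = (d : ℂ) := by
  have hd : (d : ℂ) ≠ 0 := Nat.cast_ne_zero.mpr (NeZero.ne d)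
  have h1 := Pa_eq a
  have h2 := TT a ha
  refine ⟨?_, ?_, ?_⟩
  · rw [h1, Matrix.conjTranspose_smul, Matrix.conjTranspose_mul,
      Matrix.conjTranspose_conjTranspose]
    congr 1
    simp
  · rw [h1, Matrix.smul_mul, Matrix.mul_smul, smul_smul, Matrix.mul_assoc,
      ← Matrix.mul_assoc (Tmat d a)ᴴ, h2]
    rw [Matrix.smul_mul, Matrix.mul_smul, Matrix.one_mul, smul_smul]
    congr 1
    field_simp
  · rw [h1, Matrix.trace_smul, Matrix.trace_mul_comm, h2, Matrix.trace_smul, Matrix.trace_one]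
    simp [ZMod.card, smul_eq_mul]
    field_simp
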